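/- Let α, γ be real numbers with α > 0 and γ > 0, and let β > 0 satisfy β(α+γ) < 4. For κ ≥ 0 let p*(κ) ∈ [0,1] denote a fixed point of p ↦ 1/(1 + exp(β·(α − κ − p(α+γ)))). If 0 ≤ κ₁ < κ₂ and p₁ = p*(κ₁), p₂ = p*(κ₂) are fixed points for the respective switching costs, then p₁ < p₂. That is, the equilibrium probability of the status-quo action is strictly increasing in the switching cost κ. -/

import Mathlib

/-- The logistic-type map `x ↦ 1/(1+exp x)` is strictly antitone. -/
lemma qre_aux_anti {a b : ℝ} (h : a < b) :
    1 / (1 + Real.exp b) < 1 / (1 + Real.exp a) := by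
  apply one_div_lt_one_div_of_lt
  · positivity
  · have := Real.exp_lt_exp.mpr h
    linarith

/-- Lipschitz bound with constant 1/4. -/
lemma qre_aux_lip {a b : ℝ} (h : a ≤ b) :
    1 / (1 + Real.exp a) - 1 / (1 + Real.exp b) ≤ (b - a) / 4 := by
  rcases eq_or_lt_of_le h with rfl | h
  · simp
  set f : ℝ → ℝ := fun x => (1 + Real.exp x)⁻¹ with hf
  have hd : ∀ x : ℝ, HasDerivAt f (-(Real.exp x) / (1 + Real.exp x) ^ 2) x := by
    intro x
    have h1 : HasDerivAt (fun x : ℝ => 1 + Real.exp x) (Real.exp x) x :=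
      (Real.hasDerivAt_exp x).const_add 1
    have hne : (1 + Real.exp x) ≠ 0 := by positivity
    exact (by simpa using h1.inv hne : HasDerivAt (fun x : ℝ => 1 + Real.exp x)⁻¹ (-(Real.exp x) / (1 + Real.exp x) ^ 2) x)
  obtain ⟨c, hc, heq⟩ := exists_hasDerivAt_eq_slope f
    (fun x => -(Real.exp x) / (1 + Real.exp x) ^ 2) h
    (fun x _ => (hd x).continuousAt.continuousWithinAt) (fun x _ => hd x)
  have hkey : f a - f b ≤ (b - a) / 4 := by
    have hpos : (0:ℝ) < b - a := by linarith
    have : f b - f a = (-(Real.exp c) / (1 + Real.exp c) ^ 2) * (b - a) := by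
      field_simp at heq ⊢
      linarith [heq]
    have hb : Real.exp c / (1 + Real.exp c) ^ 2 ≤ 1 / 4 := by
      rw [div_le_div_iff₀ (by positivity) (by norm_num)]
      nlinarith [sq_nonneg (1 - Real.exp c), Real.exp_pos c]
    have h3 : f a - f b = Real.exp c / (1 + Real.exp c) ^ 2 * (b - a) := by
      rw [neg_div] at this; linarith
    rw [h3]
    nlinarith [mul_nonneg (sub_nonneg.mpr hb) hpos.le]
  simpa [hf, one_div] using hkey

/-- Comparative statics in the switching cost: under the contraction condition,
the equilibrium probability of the status quo is strictly increasing in `κ`. -/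
theorem qre_sb_fixedPoint_strictMono_kappa
    (α γ β : ℝ) (hα : 0 < α) (hγ : 0 < γ) (hβ : 0 < β)
    (hcontr : β * (α + γ) < 4)
    (κ₁ κ₂ p₁ p₂ : ℝ) (hκ₁ : 0 ≤ κ₁) (hκ : κ₁ < κ₂)
    (hp₁ : p₁ ∈ Set.Icc (0:ℝ) 1) (hp₂ : p₂ ∈ Set.Icc (0:ℝ) 1)
    (hfix₁ : 1 / (1 + Real.exp (β * (α - κ₁ - p₁ * (α + γ)))) = p₁)
    (hfix₂ : 1 / (1 + Real.exp (β * (α - κ₂ - p₂ * (α + γ)))) = p₂) :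
    p₁ < p₂ := by
  set t₁ := β * (α - κ₁ - p₁ * (α + γ)) with ht₁
  set t₂ := β * (α - κ₂ - p₂ * (α + γ)) with ht₂
  rcases le_or_gt t₁ t₂ with hle | hlt
  · -- Lipschitz case
    have hlip := qre_aux_lip hle
    rw [hfix₁, hfix₂] at hlip
    have hdiff : t₂ - t₁ = β * (α + γ) * (p₁ - p₂) - β * (κ₂ - κ₁) := by
      rw [ht₁, ht₂]; ring
    have hk : 0 < β * (κ₂ - κ₁) := by
      apply mul_pos hβ; linarith
    rw [hdiff] at hlip
    nlinarith [mul_nonneg (le_of_lt hβ) (le_of_lt (by linarith : (0:ℝ) < α + γ))]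
  · -- strictly antitone case
    have := qre_aux_anti hlt
    rw [hfix₁, hfix₂] at this
    exact this
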